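/- Let f be a norm on ℝ^p, let (a, b) be a linear classifier with a ≠ 0, let x_F ∈ ℝ^p satisfy ⟪a, x_F⟫ < b, and let x_CF be an optimal counterfactual of x_F under f with x_CF ≠ x_F. Then there exists λ ∈ ℝ with λ ≠ 0 such that ⟪a, x_CF⟫ = b and λ • a ∈ ∂f(x_CF − x_F). -/

import Mathlib

open Finset

noncomputable section

/-- The standard inner product on `Fin p → ℝ`. -/
def dot {p : ℕ} (a x : Fin p → ℝ) : ℝ := ∑ k, a k * x k

/-- `f` is a norm on `ℝ^p`. -/
def IsNorm {p : ℕ} (f : (Fin p → ℝ) → ℝ) : Prop :=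
  (∀ x, f x = 0 ↔ x = 0) ∧ (∀ (c : ℝ) (x : Fin p → ℝ), f (c • x) = |c| * f x) ∧
    (∀ x y, f (x + y) ≤ f x + f y)

/-- The dual norm `f*(w) = sup { ⟪w, v⟫ : f v ≤ 1 }`. -/
def dualNorm {p : ℕ} (f : (Fin p → ℝ) → ℝ) (w : Fin p → ℝ) : ℝ :=
  sSup {t : ℝ | ∃ v : Fin p → ℝ, f v ≤ 1 ∧ t = dot w v}

/-- `xCF` is an optimal counterfactual of the factual `xF` (classified 'No') under norm `f`. -/
def IsOptCF {p : ℕ} (a : Fin p → ℝ) (b : ℝ) (f : (Fin p → ℝ) → ℝ)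
    (xF xCF : Fin p → ℝ) : Prop :=
  b ≤ dot a xCF ∧ ∀ z : Fin p → ℝ, b ≤ dot a z → f (xCF - xF) ≤ f (z - xF)

/-- `xRCF` is an optimal robust counterfactual of the factual `xF` (classified 'No')
under norm `f`, with robustness norm `g` and radius `ρ`. -/
def IsOptRCF {p : ℕ} (a : Fin p → ℝ) (b : ℝ) (f g : (Fin p → ℝ) → ℝ) (ρ : ℝ)
    (xF xRCF : Fin p → ℝ) : Prop :=
  (∀ s : Fin p → ℝ, g s ≤ ρ → b ≤ dot a (xRCF + s)) ∧
    ∀ z : Fin p → ℝ, (∀ s : Fin p → ℝ, g s ≤ ρ → b ≤ dot a (z + s)) →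
      f (xRCF - xF) ≤ f (z - xF)

/-- `w` is a subgradient of `f` at `x₀`. -/
def IsSubgradient {p : ℕ} (f : (Fin p → ℝ) → ℝ) (x₀ w : Fin p → ℝ) : Prop :=
  ∀ y : Fin p → ℝ, f x₀ + dot w (y - x₀) ≤ f y

lemma dot_smul' {p : ℕ} (a : Fin p → ℝ) (c : ℝ) (x : Fin p → ℝ) :
    dot a (c • x) = c * dot a x := by
  simp [dot, Finset.mul_sum, mul_left_comm]

lemma smul_dot' {p : ℕ} (c : ℝ) (a x : Fin p → ℝ) :
    dot (c • a) x = c * dot a x := by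
  simp [dot, Finset.mul_sum, mul_assoc]

lemma dot_add' {p : ℕ} (a x y : Fin p → ℝ) :
    dot a (x + y) = dot a x + dot a y := by
  simp [dot, mul_add, Finset.sum_add_distrib]

lemma dot_sub' {p : ℕ} (a x y : Fin p → ℝ) :
    dot a (x - y) = dot a x - dot a y := by
  simp [dot, mul_sub, Finset.sum_sub_distrib]

lemma myNorm_nonneg {p : ℕ} {f : (Fin p → ℝ) → ℝ} (hf : IsNorm f) (x : Fin p → ℝ) :
    0 ≤ f x := by
  have h0 : f (0 : Fin p → ℝ) = 0 := (hf.1 0).mpr rfl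
  have htri := hf.2.2 x (-x)
  have hneg : f (-x) = f x := by
    have := hf.2.1 (-1) x
    simpa using this
  rw [hneg, add_neg_cancel, h0] at htri
  linarith

theorem cf_optimality_conditions {p : ℕ} (hp : 1 ≤ p)
    (f : (Fin p → ℝ) → ℝ) (hf : IsNorm f)
    (a : Fin p → ℝ) (ha : a ≠ 0) (b : ℝ) (xF xCF : Fin p → ℝ)
    (hxF : dot a xF < b) (hopt : IsOptCF a b f xF xCF) (hne : xCF ≠ xF) :
    ∃ l : ℝ, l ≠ 0 ∧ dot a xCF = b ∧ IsSubgradient f (xCF - xF) (l • a) := by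
  set d := xCF - xF with hd
  have hdne : d ≠ 0 := sub_ne_zero.mpr hne
  have hfd : 0 < f d := by
    rcases lt_or_eq_of_le (myNorm_nonneg hf d) with h | h
    · exact h
    · exact absurd ((hf.1 d).mp h.symm) hdne
  -- dot a xCF = b
  have hb : dot a xCF = b := by
    by_contra hbne
    have hlt : b < dot a xCF := lt_of_le_of_ne hopt.1 (Ne.symm hbne)
    have hδ' : 0 < dot a xCF - dot a xF := by linarith
    set t : ℝ := (b - dot a xF) / (dot a xCF - dot a xF) with ht
    have ht0 : 0 < t := div_pos (by linarith) hδ'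
    have ht1 : t < 1 := by
      rw [ht, div_lt_one hδ']; linarith
    have hz : dot a (xF + t • d) = b := by
      rw [dot_add', dot_smul', hd, dot_sub', ht]
      field_simp
      ring
    have := hopt.2 (xF + t • d) (le_of_eq hz.symm)
    rw [add_sub_cancel_left, hf.2.1 t d, abs_of_pos ht0, ← hd] at this
    nlinarith
  have hδ : 0 < b - dot a xF := by linarith
  have hdot_d : dot a d = b - dot a xF := by rw [hd, dot_sub', hb]
  refine ⟨f d / (b - dot a xF), ?_, hb, ?_⟩
  · positivity
  · intro y
    rw [smul_dot', dot_sub', hdot_d]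
    suffices h : f d / (b - dot a xF) * dot a y ≤ f y by
      have : f d / (b - dot a xF) * (b - dot a xF) = f d := by field_simp
      nlinarith
    rcases le_or_gt (dot a y) 0 with hy | hy
    · have h1 : 0 ≤ f d / (b - dot a xF) := by positivity
      have := mul_nonpos_of_nonneg_of_nonpos h1 hy
      linarith [myNorm_nonneg hf y]
    · set c : ℝ := (b - dot a xF) / dot a y with hc
      have hc0 : 0 < c := div_pos hδ hy
      have hz : dot a (xF + c • y) = b := by
        rw [dot_add', dot_smul', hc]; field_simp; ring
      have hle := hopt.2 (xF + c • y) (le_of_eq hz.symm)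
      rw [add_sub_cancel_left, hf.2.1 c y, abs_of_pos hc0, ← hd, hc] at hle
      rw [div_mul_eq_mul_div, div_le_iff₀ hδ]
      rw [div_mul_eq_mul_div, le_div_iff₀ hy] at hle
      nlinarith
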